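/- (Nonautonomous Markus–Yamabe conjecture in dimension 1.) Let g : [0,∞) × ℝ → ℝ be continuous in t and C¹ in the second variable, with g(t,x) = 0 if and only if x = 0 (for all t ≥ 0), and suppose ∂₂g(t, y(t)) is bounded in t for every measurable function y : [0,∞) → ℝ. Assume that for every measurable function θ : [0,∞) → ℝ there exist constants K ≥ 1 and α > 0 such that exp(∫_s^t ∂₂g(τ, θ(τ)) dτ) ≤ K e^{-α(t-s)} for all t ≥ s ≥ 0 (i.e., the exponential dichotomy spectrum on [0,∞) of the linearization ż = ∂₂g(t, θ(t)) z is contained in (-∞, 0)). Then for every solution x : [t₀,∞) → ℝ of ẋ = g(t,x) with x(t₀) = x₀ there exist constants K ≥ 1 and α > 0 such that |x(t)| ≤ K e^{-α(t - t₀)} |x₀| for all t ≥ t₀; in particular every solution converges to 0 and the trivial solution is globally uniformly asymptotically stable. -/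

import Mathlib

open Real Set

open Filter Topology


open Classical in
private lemma my_meas_countable_support {f : ℝ → ℝ} (h : ({t | f t ≠ 0}).Countable) :
    Measurable f := by
  intro s hs
  have key : f ⁻¹' s =
      ({t | f t ≠ 0} ∩ f ⁻¹' s) ∪ ({t | f t ≠ 0}ᶜ ∩ (if (0:ℝ) ∈ s then univ else ∅)) := by
    ext t
    by_cases h0 : f t = 0
    · by_cases h0s : (0:ℝ) ∈ s <;> simp [h0, h0s]
    · simp [h0]
  rw [key]
  refine ((h.mono inter_subset_left).measurableSet).union
    ((h.measurableSet.compl).inter ?_)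
  split_ifs <;> simp

private lemma my_stripe (g₂ : ℝ → ℝ → ℝ)
    (hg₂_cont : ∀ t ≥ (0:ℝ), Continuous (g₂ t))
    (hbound : ∀ y : ℝ → ℝ, Measurable y → ∃ M : ℝ, ∀ t ≥ (0:ℝ), |g₂ t (y t)| ≤ M)
    (R : ℝ) (hR : 0 ≤ R) :
    ∃ L : ℝ, 0 ≤ L ∧ ∀ t ≥ (0:ℝ), ∀ ξ : ℝ, |ξ| ≤ R → |g₂ t ξ| ≤ L := by
  by_contra hcon
  push_neg at hcon
  set m : ℝ → ℝ := fun t => sSup ((fun ξ => |g₂ t ξ|) '' Icc (-R) R) with hm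
  have h0mem : (0:ℝ) ∈ Icc (-R) R := by constructor <;> linarith
  have hne : ((fun ξ => |g₂ (0:ℝ) ξ|) '' Icc (-R) R).Nonempty := ⟨_, mem_image_of_mem _ h0mem⟩
  have key : ∀ L : ℝ, ∃ t ≥ (0:ℝ), L < m t := by
    intro L
    obtain ⟨t, ht, ξ, hξ, hLξ⟩ := hcon (max L 0) (le_max_right _ _)
    refine ⟨t, ht, lt_of_le_of_lt (le_max_left L 0) (lt_of_lt_of_le hLξ ?_)⟩
    refine le_csSup ((isCompact_Icc).bddAbove_image ((hg₂_cont t ht).abs.continuousOn))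
      (mem_image_of_mem _ ?_)
    exact abs_le.mp hξ
  choose T hT0 hT1 using key
  -- recursive sequence
  set S : ℕ → ℝ := fun n => Nat.rec (T 0) (fun n Sn => T (max (m Sn) n)) n with hS
  have hSsucc : ∀ n : ℕ, S (n + 1) = T (max (m (S n)) n) := fun n => rfl
  have hS0 : ∀ n, 0 ≤ S (n+1) := fun n => hT0 _
  have hmono : StrictMono fun n => m (S (n + 1)) := by
    refine strictMono_nat_of_lt_succ fun n => ?_
    rw [hSsucc (n+1)]
    exact lt_of_le_of_lt (le_max_left _ _) (hT1 _)
  have hSinj : Function.Injective fun n => S (n + 1) := by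
    intro a b hab
    exact hmono.injective (congrArg m hab)
  have hmn : ∀ n : ℕ, (n:ℝ) < m (S (n+1)) := by
    intro n
    rw [hSsucc]
    exact lt_of_le_of_lt (le_max_right _ _) (hT1 _)
  -- witnesses
  have hW : ∀ n : ℕ, ∃ ξ ∈ Icc (-R) R, (n:ℝ) < |g₂ (S (n+1)) ξ| := by
    intro n
    have hne' : ((fun ξ => |g₂ (S (n+1)) ξ|) '' Icc (-R) R).Nonempty :=
      ⟨_, mem_image_of_mem _ h0mem⟩
    obtain ⟨v, hv, hnv⟩ := exists_lt_of_lt_csSup hne' (hmn n)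
    obtain ⟨ξ, hξ, rfl⟩ := hv
    exact ⟨ξ, hξ, hnv⟩
  choose W hW1 hW2 using hW
  classical
  set y : ℝ → ℝ := fun t => if h : ∃ n, S (n + 1) = t then W h.choose else 0 with hy
  have hyval : ∀ n, y (S (n+1)) = W n := by
    intro n
    have hex : ∃ k, S (k + 1) = S (n + 1) := ⟨n, rfl⟩
    have : hex.choose = n := hSinj hex.choose_spec
    simp only [hy, dif_pos hex, this]
  have hymeas : Measurable y := by
    apply my_meas_countable_support
    have : {t | y t ≠ 0} ⊆ range fun n => S (n + 1) := by
      intro t ht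
      by_contra hc
      have : ¬ ∃ n, S (n+1) = t := by
        intro ⟨n, hn⟩; exact hc ⟨n, hn⟩
      simp only [hy, dif_neg this] at ht
      exact ht (dif_neg this)
    exact (countable_range _).mono this
  obtain ⟨M, hM⟩ := hbound y hymeas
  obtain ⟨n, hn⟩ := exists_nat_gt M
  have h1 := hM (S (n+1)) (hS0 n)
  rw [hyval n] at h1
  exact absurd (lt_of_lt_of_le (lt_trans hn (hW2 n)) h1) (lt_irrefl _)


private lemma my_meas_comp_countable' {ι : Type*} [Countable ι] [MeasurableSpace ι]
    [MeasurableSingletonClass ι]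
    {F : ℝ → ι → ℝ} (hF : ∀ i, Measurable fun τ => F τ i)
    {N : ℝ → ι} (hN : Measurable N) : Measurable fun τ => F τ (N τ) := by
  intro s hs
  have key : (fun τ => F τ (N τ)) ⁻¹' s = ⋃ i, (N ⁻¹' {i}) ∩ ((fun τ => F τ i) ⁻¹' s) := by
    ext τ
    simp only [Set.mem_preimage, Set.mem_iUnion, Set.mem_inter_iff, Set.mem_singleton_iff]
    exact ⟨fun h => ⟨N τ, rfl, h⟩, fun ⟨i, hi, h⟩ => by rw [← hi] at h; exact h⟩
  rw [key]
  exact MeasurableSet.iUnion fun i => (hN (measurableSet_singleton i)).inter (hF i hs)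

private lemma my_tendsto_floor_approx (a : ℝ) :
    Tendsto (fun k : ℕ => ((⌊a * ((k:ℝ)+1)⌋ : ℝ) / ((k:ℝ)+1))) atTop (𝓝 a) := by
  have hlow : Tendsto (fun k : ℕ => a - 1 / ((k:ℝ)+1)) atTop (𝓝 a) := by
    simpa using tendsto_const_nhds.sub (tendsto_one_div_add_atTop_nhds_zero_nat (𝕜 := ℝ))
  refine tendsto_of_tendsto_of_tendsto_of_le_of_le hlow tendsto_const_nhds ?_ ?_
  · intro k
    have hk : (0:ℝ) < (k:ℝ) + 1 := by positivity
    have h1 : a * ((k:ℝ)+1) - 1 < (⌊a * ((k:ℝ)+1)⌋ : ℝ) := Int.sub_one_lt_floor _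
    have h2 : (1 / ((k:ℝ)+1)) * ((k:ℝ)+1) = 1 := one_div_mul_cancel hk.ne'
    rw [le_div_iff₀ hk]
    nlinarith [h1, h2]
  · intro k
    have hk : (0:ℝ) < (k:ℝ) + 1 := by positivity
    rw [div_le_iff₀ hk]
    exact Int.floor_le _

private lemma my_meas_g (g : ℝ → ℝ → ℝ)
    (hg_cont : ∀ x : ℝ, ContinuousOn (fun t => g t x) (Ici 0))
    (hg_cont2 : ∀ t ≥ (0:ℝ), Continuous (g t))
    (t₀ : ℝ) (ht₀ : 0 ≤ t₀) {w : ℝ → ℝ} (hw : Measurable w) :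
    Measurable fun τ => g (max τ t₀) (w τ) := by
  have hmem : ∀ τ : ℝ, max τ t₀ ∈ Ici (0:ℝ) := fun τ => le_trans ht₀ (le_max_right _ _)
  have hFmeas : ∀ (c : ℝ), Measurable fun τ => g (max τ t₀) c := by
    intro c
    exact ((hg_cont c).comp_continuous (continuous_id.max continuous_const) hmem).measurable
  apply measurable_of_tendsto_metrizable
    (f := fun k τ => g (max τ t₀) ((⌊w τ * ((k:ℝ)+1)⌋ : ℝ) / ((k:ℝ)+1)))
  · intro k
    exact my_meas_comp_countable' (ι := ℤ)
      (F := fun τ i => g (max τ t₀) ((i:ℝ) / ((k:ℝ)+1)))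
      (fun i => hFmeas _) ((hw.mul_const _).floor)
  · rw [tendsto_pi_nhds]
    intro τ
    exact ((hg_cont2 _ (hmem τ)).continuousAt).tendsto.comp (my_tendsto_floor_approx (w τ))

private lemma my_meas_g₂ (g g₂ : ℝ → ℝ → ℝ)
    (hg_cont : ∀ x : ℝ, ContinuousOn (fun t => g t x) (Ici 0))
    (hg_deriv : ∀ t ≥ (0:ℝ), ∀ x : ℝ, HasDerivAt (g t) (g₂ t x) x)
    (t₀ : ℝ) (ht₀ : 0 ≤ t₀) {w : ℝ → ℝ} (hw : Measurable w) :
    Measurable fun τ => g₂ (max τ t₀) (w τ) := by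
  have hmem : ∀ τ : ℝ, max τ t₀ ∈ Ici (0:ℝ) := fun τ => le_trans ht₀ (le_max_right _ _)
  have hg_cont2 : ∀ t ≥ (0:ℝ), Continuous (g t) := by
    intro t ht
    exact continuous_iff_continuousAt.mpr fun ξ => (hg_deriv t ht ξ).differentiableAt.continuousAt
  apply measurable_of_tendsto_metrizable
    (f := fun m τ => (g (max τ t₀) (w τ + 1/((m:ℝ)+1)) - g (max τ t₀) (w τ)) * ((m:ℝ)+1))
  · intro m
    exact ((my_meas_g g hg_cont hg_cont2 t₀ ht₀ (hw.add_const _)).sub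
      (my_meas_g g hg_cont hg_cont2 t₀ ht₀ hw)).mul_const _
  · rw [tendsto_pi_nhds]
    intro τ
    have hd := hg_deriv (max τ t₀) (hmem τ) (w τ)
    have hslope := hasDerivAt_iff_tendsto_slope.mp hd
    have hbase : Tendsto (fun m : ℕ => w τ + 1/((m:ℝ)+1)) atTop (𝓝 (w τ)) := by
      simpa using tendsto_const_nhds.add (tendsto_one_div_add_atTop_nhds_zero_nat (𝕜 := ℝ))
    have hu : Tendsto (fun m : ℕ => w τ + 1/((m:ℝ)+1)) atTop (𝓝[≠] (w τ)) := by
      refine tendsto_nhdsWithin_of_tendsto_nhds_of_eventually_within _ hbase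
        (Eventually.of_forall fun m => ?_)
      have : (0:ℝ) < 1/((m:ℝ)+1) := by positivity
      simp only [Set.mem_compl_iff, Set.mem_singleton_iff]
      intro hcon
      nlinarith [hcon]
    have hcomp := hslope.comp hu
    refine Tendsto.congr (fun m => ?_) hcomp
    show slope (g (max τ t₀)) (w τ) (w τ + 1/((m:ℝ)+1)) = _
    rw [slope_def_field, add_sub_cancel_left]
    have hk : ((m:ℝ)+1) ≠ 0 := by positivity
    field_simp


/-- The nonautonomous Markus–Yamabe conjecture in dimension `n = 1`:
if the exponential dichotomy spectrum on `[0,∞)` of every linearization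
`ż = ∂₂g(t, θ(t)) z` along measurable functions is contained in `(-∞, 0)`
(expressed via the equivalent exponential estimate), then every solution of
`ẋ = g(t,x)` decays exponentially; the trivial solution is globally uniformly
asymptotically stable. -/
theorem nonautonomous_markus_yamabe_dim_one
    (g g₂ : ℝ → ℝ → ℝ)
    (hg_cont : ∀ x : ℝ, ContinuousOn (fun t => g t x) (Ici 0))
    (hg_deriv : ∀ t ≥ (0:ℝ), ∀ x : ℝ, HasDerivAt (g t) (g₂ t x) x)
    (hg₂_cont : ∀ t ≥ (0:ℝ), Continuous (g₂ t))
    (hg0 : ∀ t ≥ (0:ℝ), ∀ x : ℝ, g t x = 0 ↔ x = 0)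
    (hbound : ∀ y : ℝ → ℝ, Measurable y →
      ∃ M : ℝ, ∀ t ≥ (0:ℝ), |g₂ t (y t)| ≤ M)
    (hspec : ∀ θ : ℝ → ℝ, Measurable θ →
      ∃ K ≥ (1:ℝ), ∃ α > (0:ℝ), ∀ s t : ℝ, 0 ≤ s → s ≤ t →
        exp (∫ τ in s..t, g₂ τ (θ τ)) ≤ K * exp (-α * (t - s))) :
    ∀ t₀ ≥ (0:ℝ), ∀ (x₀ : ℝ) (x : ℝ → ℝ), x t₀ = x₀ →
      (∀ t ≥ t₀, HasDerivAt x (g t (x t)) t) →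
      ∃ K ≥ (1:ℝ), ∃ α > (0:ℝ), ∀ t ≥ t₀,
        |x t| ≤ K * exp (-α * (t - t₀)) * |x₀| := by
  intro t₀ ht₀ x₀ x hx0 hx
  classical
  have hg_cont2 : ∀ t ≥ (0:ℝ), Continuous (g t) := fun t ht =>
    continuous_iff_continuousAt.mpr fun ξ => (hg_deriv t ht ξ).differentiableAt.continuousAt
  have hxc : ContinuousOn x (Ici t₀) := fun τ hτ =>
    ((hx τ hτ).continuousAt).continuousWithinAt
  have stripe := my_stripe g₂ hg₂_cont hbound
  -- bound for |x| on compact intervals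
  have hRex : ∀ t₁, t₀ ≤ t₁ → ∃ R : ℝ, 0 ≤ R ∧ ∀ τ ∈ Icc t₀ t₁, |x τ| ≤ R := by
    intro t₁ ht₁
    obtain ⟨τm, hτm, hmax⟩ := isCompact_Icc.exists_isMaxOn (nonempty_Icc.mpr ht₁)
      ((hxc.mono Icc_subset_Ici_self).abs)
    exact ⟨|x τm|, abs_nonneg _, fun τ hτ => hmax hτ⟩
  -- Lipschitz bounds for the vector field on stripes
  have hlip : ∀ R L : ℝ, 0 ≤ L → (∀ t ≥ (0:ℝ), ∀ ξ : ℝ, |ξ| ≤ R → |g₂ t ξ| ≤ L) →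
      ∀ s : ℝ, LipschitzOnWith (Real.toNNReal L) (fun ξ => g (max s t₀) ξ) (Icc (-R) R) := by
    intro R L hL0 hLs s
    refine (convex_Icc _ _).lipschitzOnWith_of_nnnorm_hasDerivWithin_le
      (f' := g₂ (max s t₀))
      (fun ξ _ => (hg_deriv _ (le_trans ht₀ (le_max_right _ _)) ξ).hasDerivWithinAt)
      (fun ξ hξ => ?_)
    rw [← NNReal.coe_le_coe, coe_nnnorm, Real.norm_eq_abs, Real.coe_toNNReal L hL0]
    exact hLs _ (le_trans ht₀ (le_max_right _ _)) ξ (abs_le.mpr hξ)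
  -- backward uniqueness
  have huniq_bwd : ∀ t₁, t₀ ≤ t₁ → x t₁ = 0 → x t₀ = 0 := by
    intro t₁ ht₁ hxt₁
    obtain ⟨R, hR0, hRb⟩ := hRex t₁ ht₁
    obtain ⟨L, hL0, hLs⟩ := stripe R hR0
    have key := ODE_solution_unique_of_mem_Icc_left
      (v := fun s ξ => g (max s t₀) ξ) (s := fun _ => Icc (-R) R)
      (K := Real.toNNReal L) (a := t₀) (b := t₁) (f := x) (g := fun _ => (0:ℝ))
      (fun s _ => hlip R L hL0 hLs s)
      (hxc.mono Icc_subset_Ici_self)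
      (fun τ hτ => by
        have h := (hx τ hτ.1.le).hasDerivWithinAt (s := Iic τ)
        simpa [max_eq_left hτ.1.le] using h)
      (fun τ hτ => abs_le.mp (hRb τ ⟨hτ.1.le, hτ.2⟩))
      continuousOn_const
      (fun τ hτ => by
        have h0 : g (max τ t₀) 0 = 0 := (hg0 _ (le_trans ht₀ (le_max_right _ _)) 0).mpr rfl
        simpa [h0] using (hasDerivWithinAt_const τ (Iic τ) (0:ℝ)))
      (fun τ hτ => by
        constructor
        · simpa using neg_nonpos.mpr hR0
        · exact hR0)
      hxt₁
    exact key (left_mem_Icc.mpr ht₁)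
  -- forward uniqueness
  have huniq_fwd : x t₀ = 0 → ∀ t₁, t₀ ≤ t₁ → x t₁ = 0 := by
    intro h0 t₁ ht₁
    obtain ⟨R, hR0, hRb⟩ := hRex t₁ ht₁
    obtain ⟨L, hL0, hLs⟩ := stripe R hR0
    have key := ODE_solution_unique_of_mem_Icc_right
      (v := fun s ξ => g (max s t₀) ξ) (s := fun _ => Icc (-R) R)
      (K := Real.toNNReal L) (a := t₀) (b := t₁) (f := x) (g := fun _ => (0:ℝ))
      (fun s _ => hlip R L hL0 hLs s)
      (hxc.mono Icc_subset_Ici_self)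
      (fun τ hτ => by
        have h := (hx τ hτ.1).hasDerivWithinAt (s := Ici τ)
        simpa [max_eq_left hτ.1] using h)
      (fun τ hτ => abs_le.mp (hRb τ ⟨hτ.1, hτ.2.le⟩))
      continuousOn_const
      (fun τ hτ => by
        have h0' : g (max τ t₀) 0 = 0 := (hg0 _ (le_trans ht₀ (le_max_right _ _)) 0).mpr rfl
        simpa [h0'] using (hasDerivWithinAt_const τ (Ici τ) (0:ℝ)))
      (fun τ hτ => by
        constructor
        · simpa using neg_nonpos.mpr hR0
        · exact hR0)
      h0
    exact key (right_mem_Icc.mpr ht₁)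
  by_cases hx₀ : x₀ = 0
  · refine ⟨1, le_refl 1, 1, one_pos, fun t ht => ?_⟩
    have : x t = 0 := huniq_fwd (by rw [hx0, hx₀]) t ht
    rw [this, hx₀]
    simp
  · -- main case : the solution never vanishes
    have hne : ∀ τ, t₀ ≤ τ → x τ ≠ 0 := by
      intro τ hτ h0
      exact hx₀ (by rw [← hx0]; exact huniq_bwd τ hτ h0)
    set ρ : ℝ → ℝ := fun τ => max τ t₀ with hρ
    have hρ0 : ∀ τ, (0:ℝ) ≤ ρ τ := fun τ => le_trans ht₀ (le_max_right _ _)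
    have hρt₀ : ∀ τ, t₀ ≤ ρ τ := fun τ => le_max_right _ _
    have hρmeas : Measurable ρ := (continuous_id.max continuous_const).measurable
    set X : ℝ → ℝ := fun τ => x (ρ τ) with hX
    have hXcont : Continuous X := continuous_iff_continuousAt.mpr fun τ =>
      ((hx (ρ τ) (hρt₀ τ)).continuousAt).comp ((continuous_id.max continuous_const).continuousAt)
    have hXmeas : Measurable X := hXcont.measurable
    have hXne : ∀ τ, X τ ≠ 0 := fun τ => hne _ (hρt₀ τ)
    set C : ℝ → ℝ := fun τ => deriv x (ρ τ) / X τ with hC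
    have hCmeas : Measurable C := ((measurable_deriv x).comp hρmeas).div hXmeas
    have hCval : ∀ τ, C τ = g (ρ τ) (X τ) / X τ := by
      intro τ
      rw [hC]
      simp only
      rw [(hx (ρ τ) (hρt₀ τ)).deriv]
    -- mean value theorem : the logarithmic derivative is a value of g₂
    have hMVT : ∀ τ : ℝ, ∃ ξ : ℝ, g₂ (ρ τ) ξ = C τ := by
      intro τ
      rcases lt_or_gt_of_ne (hXne τ) with hz | hz
      · obtain ⟨ξ, _, hval⟩ := exists_hasDerivAt_eq_slope (g (ρ τ)) (g₂ (ρ τ)) hz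
          ((hg_cont2 _ (hρ0 τ)).continuousOn) (fun y _ => hg_deriv _ (hρ0 τ) y)
        refine ⟨ξ, ?_⟩
        rw [hval, (hg0 _ (hρ0 τ) 0).mpr rfl, hCval τ, zero_sub, zero_sub, neg_div_neg_eq]
      · obtain ⟨ξ, _, hval⟩ := exists_hasDerivAt_eq_slope (g (ρ τ)) (g₂ (ρ τ)) hz
          ((hg_cont2 _ (hρ0 τ)).continuousOn) (fun y _ => hg_deriv _ (hρ0 τ) y)
        refine ⟨ξ, ?_⟩
        rw [hval, (hg0 _ (hρ0 τ) 0).mpr rfl, hCval τ, sub_zero, sub_zero]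
    -- enumeration of the rationals
    set r : ℕ → ℝ := fun n => ((Denumerable.ofNat ℚ n : ℚ) : ℝ) with hr
    have hP : ∀ τ : ℝ, ∃ n : ℕ, C τ - Real.exp (-τ) < g₂ (ρ τ) (r n * X τ) := by
      intro τ
      obtain ⟨ξ, hξ⟩ := hMVT τ
      have hU : IsOpen ((g₂ (ρ τ)) ⁻¹' (Ioi (C τ - Real.exp (-τ)))) :=
        (hg₂_cont _ (hρ0 τ)).isOpen_preimage _ isOpen_Ioi
      have hUne : ((g₂ (ρ τ)) ⁻¹' (Ioi (C τ - Real.exp (-τ)))).Nonempty :=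
        ⟨ξ, by simp only [mem_preimage, mem_Ioi, hξ]; linarith [Real.exp_pos (-τ)]⟩
      have hsurj : Function.Surjective (Denumerable.ofNat ℚ) :=
        fun q => ⟨_, Denumerable.ofNat_encode q⟩
      have h3 : DenseRange (fun n : ℕ => ((Denumerable.ofNat ℚ n : ℚ) : ℝ)) :=
        DenseRange.comp Rat.denseRange_cast hsurj.denseRange Rat.continuous_coe_real
      have h2 : DenseRange (fun y : ℝ => y * X τ) :=
        (Homeomorph.mulRight₀ (X τ) (hXne τ)).surjective.denseRange
      have hdr : DenseRange (fun n : ℕ => r n * X τ) :=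
        DenseRange.comp h2 h3 (Homeomorph.mulRight₀ (X τ) (hXne τ)).continuous
      obtain ⟨n, hn⟩ := hdr.exists_mem_open hU hUne
      exact ⟨n, hn⟩
    set N : ℝ → ℕ := fun τ => Nat.find (hP τ) with hN
    have hNmeas : Measurable N := by
      apply measurable_find hP
      intro k
      exact measurableSet_lt
        (hCmeas.sub ((Real.continuous_exp.comp continuous_neg).measurable))
        (my_meas_g₂ g g₂ hg_cont hg_deriv t₀ ht₀ (hXmeas.const_mul (r k)))
    set θ : ℝ → ℝ := fun τ => r (N τ) * X τ with hθ
    have hNspec : ∀ τ, C τ - Real.exp (-τ) < g₂ (ρ τ) (θ τ) := fun τ => Nat.find_spec (hP τ)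
    have hθmeas : Measurable θ :=
      my_meas_comp_countable' (F := fun τ n => r n * X τ)
        (fun n => hXmeas.const_mul (r n)) hNmeas
    have hΦθmeas : Measurable fun τ => g₂ (ρ τ) (θ τ) :=
      my_meas_g₂ g g₂ hg_cont hg_deriv t₀ ht₀ hθmeas
    obtain ⟨M, hM⟩ := hbound θ hθmeas
    obtain ⟨K, hK1, α, hα, hKα⟩ := hspec θ hθmeas
    have he1 : (1:ℝ) ≤ Real.exp 1 := by
      have := Real.add_one_le_exp 1; linarith
    refine ⟨Real.exp 1 * K, by nlinarith, α, hα, fun t ht => ?_⟩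
    obtain ⟨R, hR0, hRb⟩ := hRex t ht
    obtain ⟨L, hL0, hLs⟩ := stripe R hR0
    set c : ℝ → ℝ := fun τ => g τ (x τ) / x τ with hc
    have hceq : EqOn c C (Icc t₀ t) := by
      intro τ hτ
      rw [hc, hCval τ, hX]
      simp only
      rw [show ρ τ = τ from max_eq_left hτ.1]
    -- boundedness of c on [t₀, t]
    have hgb : ∀ τ, t₀ ≤ τ → |x τ| ≤ R → |g τ (x τ)| ≤ L * |x τ| := by
      intro τ hτ hxR
      have h0mem : (0:ℝ) ∈ Icc (-R) R := ⟨by linarith, hR0⟩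
      have hmem : x τ ∈ Icc (-R) R := abs_le.mp hxR
      have key := Convex.norm_image_sub_le_of_norm_hasDerivWithin_le
        (s := Icc (-R) R) (f := g τ) (f' := g₂ τ)
        (fun y _ => (hg_deriv τ (le_trans ht₀ hτ) y).hasDerivWithinAt)
        (fun y hy => by
          rw [Real.norm_eq_abs]
          exact hLs τ (le_trans ht₀ hτ) y (abs_le.mpr hy))
        (convex_Icc _ _) h0mem hmem
      rw [(hg0 τ (le_trans ht₀ hτ) 0).mpr rfl, sub_zero, sub_zero,
        Real.norm_eq_abs, Real.norm_eq_abs] at key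
      exact key
    have hcbound : ∀ τ ∈ Icc t₀ t, |c τ| ≤ L := by
      intro τ hτ
      rw [hc]
      simp only [abs_div]
      rw [div_le_iff₀ (abs_pos.mpr (hne τ hτ.1))]
      exact hgb τ hτ.1 (hRb τ hτ)
    have hcint : IntervalIntegrable c MeasureTheory.volume t₀ t := by
      rw [intervalIntegrable_iff_integrableOn_Icc_of_le ht]
      rw [MeasureTheory.integrableOn_congr_fun hceq measurableSet_Icc]
      refine MeasureTheory.Integrable.mono' (MeasureTheory.integrable_const L)
        (hCmeas.aestronglyMeasurable.restrict) ?_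
      rw [MeasureTheory.ae_restrict_iff' measurableSet_Icc]
      refine MeasureTheory.ae_of_all _ fun τ hτ => ?_
      rw [Real.norm_eq_abs, ← hceq hτ]
      exact hcbound τ hτ
    have hGeq : EqOn (fun τ => g₂ τ (θ τ)) (fun τ => g₂ (ρ τ) (θ τ)) (Icc t₀ t) := by
      intro τ hτ
      simp only
      rw [show ρ τ = τ from max_eq_left hτ.1]
    have hGint : IntervalIntegrable (fun τ => g₂ τ (θ τ)) MeasureTheory.volume t₀ t := by
      rw [intervalIntegrable_iff_integrableOn_Icc_of_le ht]
      rw [MeasureTheory.integrableOn_congr_fun hGeq measurableSet_Icc]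
      refine MeasureTheory.Integrable.mono' (MeasureTheory.integrable_const M)
        (hΦθmeas.aestronglyMeasurable.restrict) ?_
      rw [MeasureTheory.ae_restrict_iff' measurableSet_Icc]
      refine MeasureTheory.ae_of_all _ fun τ hτ => ?_
      rw [Real.norm_eq_abs, show ρ τ = τ from max_eq_left hτ.1]
      exact hM τ (le_trans ht₀ hτ.1)
    have hexpint : IntervalIntegrable (fun τ => Real.exp (-τ)) MeasureTheory.volume t₀ t :=
      (Real.continuous_exp.comp continuous_neg).intervalIntegrable _ _
    -- fundamental theorem of calculus for log |x|
    have hftc : ∫ τ in t₀..t, c τ = Real.log (x t) - Real.log (x t₀) := by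
      apply intervalIntegral.integral_eq_sub_of_hasDerivAt
      · intro τ hτ
        rw [uIcc_of_le ht] at hτ
        exact (hx τ hτ.1).log (hne τ hτ.1)
      · exact hcint
    -- pointwise comparison
    have hpt : ∀ τ ∈ Icc t₀ t, c τ ≤ g₂ τ (θ τ) + Real.exp (-τ) := by
      intro τ hτ
      have h1 := hNspec τ
      rw [hceq hτ]
      rw [show ρ τ = τ from max_eq_left hτ.1] at h1
      linarith
    have hint1 : ∫ τ in t₀..t, c τ ≤ ∫ τ in t₀..t, (g₂ τ (θ τ) + Real.exp (-τ)) :=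
      intervalIntegral.integral_mono_on ht hcint (hGint.add hexpint) hpt
    have hint2 : ∫ τ in t₀..t, (g₂ τ (θ τ) + Real.exp (-τ))
        = (∫ τ in t₀..t, g₂ τ (θ τ)) + ∫ τ in t₀..t, Real.exp (-τ) :=
      intervalIntegral.integral_add hGint hexpint
    have hint3 : ∫ τ in t₀..t, Real.exp (-τ) ≤ 1 := by
      have hder : ∀ τ ∈ uIcc t₀ t, HasDerivAt (fun s => -Real.exp (-s)) (Real.exp (-τ)) τ := by
        intro τ _
        have h := ((Real.hasDerivAt_exp (-τ)).comp τ (hasDerivAt_neg τ)).neg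
        exact h.congr_deriv (by ring)
      rw [intervalIntegral.integral_eq_sub_of_hasDerivAt hder hexpint]
      have h1 : Real.exp (-t₀) ≤ 1 := by
        rw [show (1:ℝ) = Real.exp 0 from (Real.exp_zero).symm]
        exact Real.exp_le_exp.mpr (by linarith)
      have h2 := (Real.exp_pos (-t)).le
      linarith
    have hlog : Real.log (x t) ≤ Real.log x₀ + ((∫ τ in t₀..t, g₂ τ (θ τ)) + 1) := by
      rw [hx0] at hftc
      rw [hint2] at hint1
      linarith
    have hxt : |x t| = Real.exp (Real.log (x t)) := (Real.exp_log_eq_abs (hne t ht)).symm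
    have hx₀abs : Real.exp (Real.log x₀) = |x₀| := Real.exp_log_eq_abs hx₀
    have h5 : Real.exp (∫ τ in t₀..t, g₂ τ (θ τ)) ≤ K * Real.exp (-α * (t - t₀)) :=
      hKα t₀ t ht₀ ht
    calc |x t| = Real.exp (Real.log (x t)) := hxt
      _ ≤ Real.exp (Real.log x₀ + ((∫ τ in t₀..t, g₂ τ (θ τ)) + 1)) := Real.exp_le_exp.mpr hlog
      _ = |x₀| * Real.exp (∫ τ in t₀..t, g₂ τ (θ τ)) * Real.exp 1 := by
          rw [Real.exp_add, Real.exp_add, hx₀abs]; ring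
      _ ≤ |x₀| * (K * Real.exp (-α * (t - t₀))) * Real.exp 1 :=
          mul_le_mul_of_nonneg_right
            (mul_le_mul_of_nonneg_left h5 (abs_nonneg x₀)) (Real.exp_pos 1).le
      _ = Real.exp 1 * K * Real.exp (-α * (t - t₀)) * |x₀| := by ring
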